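/- Under the no-arbitrage assumption, if φ(f) = inf{c + π(y) : c + ⟨y,g⟩ ≥ f pointwise} is finite, then the infimum is attained: there exists y ∈ ℝᵐ with φ(f) + ⟨y, g(ω)⟩ − π(y) ≥ f(ω) for all ω ∈ Ω. -/

import Mathlib

open MeasureTheory

open Filter Topology Metric
open Filter Topology Metric

lemma lemA {Ω : Type*} {ι : Type*} [Fintype ι] [DecidableEq ι]
    (h : ι → Ω → ℝ) (f : Ω → ℝ)
    (hNA : ∀ u : ι → ℝ, (∀ j, 0 ≤ u j) → (∀ ω, 0 ≤ ∑ j, u j * h j ω) →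
      ∀ ω, ∑ j, u j * h j ω = 0)
    (L : ℝ) :
    ∀ (N : ℕ) (J : Finset ι), J.card ≤ N → ∀ (z : ℕ → ι → ℝ),
      (∀ n j, 0 ≤ z n j) → (∀ n j, j ∉ J → z n j = 0) →
      (∀ (n : ℕ) ω, f ω ≤ L + 1/((n:ℝ)+1) + ∑ j, z n j * h j ω) →
      ∃ zz : ι → ℝ, (∀ j, 0 ≤ zz j) ∧ ∀ ω, f ω ≤ L + ∑ j, zz j * h j ω := by
  intro N
  induction N with
  | zero =>
    intro J hJ z hz0 hsupp hfeas
    have hJe : J = ∅ := Finset.card_eq_zero.mp (Nat.le_zero.mp hJ)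
    refine ⟨0, fun j => le_refl 0, fun ω => ?_⟩
    have hlim : Tendsto (fun n : ℕ => L + 1/((n:ℝ)+1) + ∑ j, z n j * h j ω)
        atTop (𝓝 (L + ∑ j, (0:ι → ℝ) j * h j ω)) := by
      have : ∀ n, ∑ j, z n j * h j ω = ∑ j, (0:ι → ℝ) j * h j ω := by
        intro n
        refine Finset.sum_congr rfl fun j _ => ?_
        rw [hsupp n j (by simp [hJe])]; simp
      simp only [this]
      have := (tendsto_const_nhds (x := L) (f := atTop (α := ℕ))).add
        tendsto_one_div_add_atTop_nhds_zero_nat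
      simpa using this.add (tendsto_const_nhds (x := ∑ j, (0:ι → ℝ) j * h j ω))
    exact ge_of_tendsto' hlim (fun n => hfeas n ω)
  | succ N IH =>
    intro J hJ z hz0 hsupp hfeas
    by_cases hb : ∃ M : ℝ, ∃ᶠ n in atTop, ‖z n‖ ≤ M
    · -- bounded case
      obtain ⟨M, hM⟩ := hb
      obtain ⟨φ, hφ, hφM⟩ := extraction_of_frequently_atTop hM
      have hball : ∀ n, z (φ n) ∈ closedBall (0 : ι → ℝ) M := by
        intro n; rw [mem_closedBall, dist_zero_right]; exact hφM n
      obtain ⟨zz, -, ψ, hψ, hzz⟩ :=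
        (isCompact_closedBall (0 : ι → ℝ) M).tendsto_subseq hball
      set σ : ℕ → ℕ := φ ∘ ψ with hσ
      have hσmono : StrictMono σ := hφ.comp hψ
      have hcoord : ∀ j, Tendsto (fun n => z (σ n) j) atTop (𝓝 (zz j)) := by
        intro j
        exact ((continuous_apply j).tendsto zz).comp hzz
      refine ⟨zz, fun j => ge_of_tendsto' (hcoord j) (fun n => hz0 _ j), fun ω => ?_⟩
      have hlim : Tendsto (fun n : ℕ => L + 1/((σ n : ℝ)+1) + ∑ j, z (σ n) j * h j ω)
          atTop (𝓝 (L + 0 + ∑ j, zz j * h j ω)) := by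
        refine Tendsto.add (Tendsto.add tendsto_const_nhds ?_) ?_
        · exact tendsto_one_div_add_atTop_nhds_zero_nat.comp hσmono.tendsto_atTop
        · exact tendsto_finset_sum _ fun j _ => (hcoord j).mul_const _
      rw [add_zero] at hlim
      exact ge_of_tendsto' hlim (fun n => hfeas (σ n) ω)
    · -- unbounded case
      push_neg at hb
      have htop : Tendsto (fun n => ‖z n‖) atTop atTop := by
        refine tendsto_atTop.2 fun M => ?_
        have := hb M
        filter_upwards [this] with n hn
        exact hn.le
      obtain ⟨N₀, hN₀⟩ := (tendsto_atTop.1 htop 1).exists_forall_of_atTop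
      set w : ℕ → ι → ℝ := fun n => ‖z (n + N₀)‖⁻¹ • z (n + N₀) with hw
      have hz1 : ∀ n : ℕ, 1 ≤ ‖z (n + N₀)‖ := fun n => hN₀ _ (Nat.le_add_left _ _)
      have hzpos : ∀ n : ℕ, 0 < ‖z (n + N₀)‖ := fun n => lt_of_lt_of_le one_pos (hz1 n)
      have hwnorm : ∀ n, ‖w n‖ = 1 := by
        intro n
        rw [hw]
        simp only
        rw [norm_smul, norm_inv, norm_norm, inv_mul_cancel₀ (ne_of_gt (hzpos n))]
      have hball : ∀ n, w n ∈ closedBall (0 : ι → ℝ) 1 := by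
        intro n; rw [mem_closedBall, dist_zero_right, hwnorm n]
      obtain ⟨u, -, ψ, hψ, hwu⟩ := (isCompact_closedBall (0 : ι → ℝ) 1).tendsto_subseq hball
      set σ : ℕ → ℕ := fun n => ψ n + N₀ with hσ
      have hσge : ∀ n, n ≤ σ n := fun n => le_trans hψ.le_apply (Nat.le_add_right _ _)
      have hwz : ∀ n j, w (ψ n) j = ‖z (σ n)‖⁻¹ * z (σ n) j := by
        intro n j; simp [hw, hσ]
      have hcoord : ∀ j, Tendsto (fun n => w (ψ n) j) atTop (𝓝 (u j)) :=
        fun j => ((continuous_apply j).tendsto u).comp hwu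
      have hu0 : ∀ j, 0 ≤ u j := by
        intro j
        refine ge_of_tendsto' (hcoord j) (fun n => ?_)
        rw [hwz n j]
        exact mul_nonneg (inv_nonneg.2 (norm_nonneg _)) (hz0 _ j)
      have husupp : ∀ j, j ∉ J → u j = 0 := by
        intro j hj
        refine tendsto_nhds_unique (hcoord j) ?_
        have hzw : ∀ n, w (ψ n) j = 0 := by
          intro n; rw [hwz n j, hsupp _ j hj, mul_zero]
        simp only [hzw]; exact tendsto_const_nhds
      have hunorm : ‖u‖ = 1 := by
        have h1 : Tendsto (fun n => ‖w (ψ n)‖) atTop (𝓝 ‖u‖) :=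
          (continuous_norm.tendsto u).comp hwu
        have h2 : Tendsto (fun n => ‖w (ψ n)‖) atTop (𝓝 1) := by
          simp only [hwnorm]; exact tendsto_const_nhds
        exact tendsto_nhds_unique h1 h2
      have hσtop : Tendsto σ atTop atTop := tendsto_atTop_mono hσge tendsto_id
      have htσ : Tendsto (fun n => ‖z (σ n)‖) atTop atTop := htop.comp hσtop
      have tinv : Tendsto (fun n => ‖z (σ n)‖⁻¹) atTop (𝓝 0) := htσ.inv_tendsto_atTop
      have hupos : ∀ ω, 0 ≤ ∑ j, u j * h j ω := by
        intro ω
        have hA : Tendsto (fun n => ∑ j, w (ψ n) j * h j ω) atTop (𝓝 (∑ j, u j * h j ω)) :=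
          tendsto_finset_sum _ fun j _ => (hcoord j).mul_const _
        have hB : Tendsto (fun n => ‖z (σ n)‖⁻¹ * (f ω - (L + 1))) atTop (𝓝 0) := by
          simpa using tinv.mul_const (f ω - (L + 1))
        refine le_of_tendsto_of_tendsto' hB hA (fun n => ?_)
        have hfe := hfeas (σ n) ω
        have ht0 : (0:ℝ) ≤ ‖z (σ n)‖⁻¹ := inv_nonneg.2 (norm_nonneg _)
        have h1 : f ω - (L + 1) ≤ ∑ j, z (σ n) j * h j ω := by
          have h2 : (1:ℝ)/((σ n : ℝ)+1) ≤ 1 := by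
            rw [div_le_one (by positivity)]
            have hc : (0:ℝ) ≤ ((σ n : ℕ) : ℝ) := Nat.cast_nonneg _
            linarith
          linarith
        calc ‖z (σ n)‖⁻¹ * (f ω - (L + 1))
            ≤ ‖z (σ n)‖⁻¹ * ∑ j, z (σ n) j * h j ω := mul_le_mul_of_nonneg_left h1 ht0
          _ = ∑ j, w (ψ n) j * h j ω := by
              rw [Finset.mul_sum]
              exact Finset.sum_congr rfl fun j _ => by rw [hwz n j, mul_assoc]
      have hzero : ∀ ω, ∑ j, u j * h j ω = 0 := hNA u hu0 hupos
      have hune : u ≠ 0 := by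
        intro hu; rw [hu] at hunorm; simp at hunorm
      obtain ⟨j₁, hj₁⟩ := Function.ne_iff.mp hune
      classical
      set Jpos : Finset ι := J.filter (fun j => 0 < u j) with hJpos
      have hj₁J : j₁ ∈ J := by
        by_contra hc; exact hj₁ (husupp j₁ hc)
      have hj₁pos : j₁ ∈ Jpos := by
        rw [hJpos, Finset.mem_filter]
        refine ⟨hj₁J, lt_of_le_of_ne (hu0 j₁) (Ne.symm ?_)⟩
        simpa using hj₁
      have hJposne : Jpos.Nonempty := ⟨j₁, hj₁pos⟩
      have hmin : ∀ n : ℕ, ∃ j ∈ Jpos, ∀ j' ∈ Jpos,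
          z (σ n) j / u j ≤ z (σ n) j' / u j' :=
        fun n => Finset.exists_min_image Jpos (fun j => z (σ n) j / u j) hJposne
      choose jmin hjmin hjminle using hmin
      obtain ⟨j₀, hj₀inf⟩ := Finite.exists_infinite_fiber jmin
      have hfreq : ∃ᶠ n in atTop, jmin n = j₀ := by
        rw [Nat.frequently_atTop_iff_infinite]
        have := Set.infinite_coe_iff.mp hj₀inf
        convert this using 1
        rfl
      obtain ⟨τ, hτ, hjτ⟩ := extraction_of_frequently_atTop hfreq
      have hj₀pos : j₀ ∈ Jpos := by rw [← hjτ 0]; exact hjmin (τ 0)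
      have hj₀J : j₀ ∈ J := (Finset.mem_filter.mp hj₀pos).1
      have huj₀ : 0 < u j₀ := (Finset.mem_filter.mp hj₀pos).2
      set s : ℕ → ℝ := fun i => z (σ (τ i)) j₀ / u j₀ with hsdef
      set z' : ℕ → ι → ℝ := fun i j => z (σ (τ i)) j - s i * u j with hz'
      have hz'0 : ∀ i j, 0 ≤ z' i j := by
        intro i j
        rcases eq_or_lt_of_le (hu0 j) with h0 | hpos
        · simp only [hz', ← h0, mul_zero, sub_zero]
          exact hz0 _ _
        · have hjJ : j ∈ J := by
            by_contra hc; rw [husupp j hc] at hpos; exact lt_irrefl _ hpos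
          have hjpos : j ∈ Jpos := Finset.mem_filter.mpr ⟨hjJ, hpos⟩
          have hle := hjminle (τ i) j hjpos
          rw [hjτ i] at hle
          simp only [hz', sub_nonneg]
          exact (le_div_iff₀ hpos).mp hle
      have hsupp' : ∀ i j, j ∉ J.erase j₀ → z' i j = 0 := by
        intro i j hj
        by_cases hjj : j = j₀
        · subst hjj
          simp only [hz', hsdef]
          rw [div_mul_cancel₀ _ (ne_of_gt huj₀), sub_self]
        · have hjJ : j ∉ J := fun hc => hj (Finset.mem_erase.mpr ⟨hjj, hc⟩)
          simp only [hz', husupp j hjJ, hsupp _ j hjJ, mul_zero, sub_zero]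
      have hfeas' : ∀ (i : ℕ) ω, f ω ≤ L + 1/((i:ℝ)+1) + ∑ j, z' i j * h j ω := by
        intro i ω
        have hsum : ∑ j, z' i j * h j ω
            = ∑ j, z (σ (τ i)) j * h j ω - s i * ∑ j, u j * h j ω := by
          rw [Finset.mul_sum, ← Finset.sum_sub_distrib]
          exact Finset.sum_congr rfl fun j _ => by simp only [hz']; ring
        rw [hsum, hzero ω, mul_zero, sub_zero]
        have hii : (i:ℝ) ≤ ((σ (τ i)):ℝ) :=
          Nat.cast_le.mpr (le_trans hτ.le_apply (hσge (τ i)))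
        have h1 : (1:ℝ)/((σ (τ i) : ℝ)+1) ≤ 1/((i:ℝ)+1) :=
          one_div_le_one_div_of_le (by positivity) (by linarith)
        linarith [hfeas (σ (τ i)) ω]
      have hcard : (J.erase j₀).card ≤ N := by
        have := Finset.card_erase_of_mem hj₀J
        omega
      exact IH (J.erase j₀) hcard z' hz'0 hsupp' hfeas'

lemma key1 (a b p q : ℝ) (ha : 0 ≤ a) (hb : 0 ≤ b) (hpq : p ≤ q) :
    max (a - b) 0 * q - max (-(a - b)) 0 * p ≤ a * q - b * p := by
  rcases le_total b a with hba | hab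
  · rw [max_eq_left (by linarith), max_eq_right (by linarith)]
    nlinarith
  · rw [max_eq_right (by linarith), max_eq_left (by linarith)]
    nlinarith

noncomputable def priceFn {m : ℕ} (pilo pihi : Fin m → ℝ) (y : Fin m → ℝ) : ℝ :=
  ∑ j, (max (y j) 0 * pihi j - max (-(y j)) 0 * pilo j)

/-- Under the no-arbitrage assumption, if φ(f) is finite then the superhedging
infimum is attained: there is y with φ(f) + ⟨y,g⟩ − π(y) ≥ f pointwise. -/
theorem stmt13 {Ω : Type*} [TopologicalSpace Ω] [PolishSpace Ω]
    [MeasurableSpace Ω] [BorelSpace Ω]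
    (m : ℕ) (g : Fin m → Ω → ℝ) (hg : ∀ j, Measurable (g j))
    (pilo pihi : Fin m → ℝ) (hple : ∀ j, pilo j ≤ pihi j)
    (f : Ω → ℝ) (hf : Measurable f)
    (hNA : ∀ y : Fin m → ℝ,
      (∀ ω, 0 ≤ (∑ j, y j * g j ω) - priceFn pilo pihi y) →
      (∀ ω, (∑ j, y j * g j ω) - priceFn pilo pihi y = 0))
    (hne : {v : ℝ | ∃ (c : ℝ) (y : Fin m → ℝ),
        (∀ ω, f ω ≤ c + ∑ j, y j * g j ω) ∧ v = c + priceFn pilo pihi y}.Nonempty) :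
    ∃ y : Fin m → ℝ, ∀ ω,
      f ω ≤ sInf {v : ℝ | ∃ (c : ℝ) (y' : Fin m → ℝ),
          (∀ ω', f ω' ≤ c + ∑ j, y' j * g j ω') ∧ v = c + priceFn pilo pihi y'}
        + (∑ j, y j * g j ω) - priceFn pilo pihi y := by
  classical
  set S : Set ℝ := {v : ℝ | ∃ (c : ℝ) (y' : Fin m → ℝ),
      (∀ ω', f ω' ≤ c + ∑ j, y' j * g j ω') ∧ v = c + priceFn pilo pihi y'} with hS
  set ι := Sum (Fin m) (Fin m) with hι
  set h : ι → Ω → ℝ :=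
    Sum.elim (fun j ω => g j ω - pihi j) (fun j ω => pilo j - g j ω) with hh
  have hid : ∀ (u : ι → ℝ) ω, ∑ i, u i * h i ω
      = (∑ j, (u (Sum.inl j) - u (Sum.inr j)) * g j ω)
        - ∑ j, (u (Sum.inl j) * pihi j - u (Sum.inr j) * pilo j) := by
    intro u ω
    rw [Fintype.sum_sum_type, ← Finset.sum_sub_distrib, ← Finset.sum_add_distrib]
    refine Finset.sum_congr rfl fun j _ => ?_
    simp only [hh, Sum.elim_inl, Sum.elim_inr]
    ring
  have hprice : ∀ u : ι → ℝ, (∀ i, 0 ≤ u i) →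
      priceFn pilo pihi (fun j => u (Sum.inl j) - u (Sum.inr j))
        ≤ ∑ j, (u (Sum.inl j) * pihi j - u (Sum.inr j) * pilo j) := by
    intro u hu
    unfold priceFn
    exact Finset.sum_le_sum fun j _ => key1 _ _ _ _ (hu _) (hu _) (hple j)
  have hNAh : ∀ u : ι → ℝ, (∀ i, 0 ≤ u i) → (∀ ω, 0 ≤ ∑ i, u i * h i ω) →
      ∀ ω, ∑ i, u i * h i ω = 0 := by
    intro u hu hpos ω
    set y : Fin m → ℝ := fun j => u (Sum.inl j) - u (Sum.inr j) with hy
    have hP := hprice u hu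
    have h2 : ∀ ω', 0 ≤ ∑ j, y j * g j ω' - priceFn pilo pihi y := by
      intro ω'
      have h3 := hpos ω'
      rw [hid u ω'] at h3
      linarith
    have h3 := hNA y h2 ω
    have h4 := hpos ω
    rw [hid u ω] at h4 ⊢
    linarith
  -- minimizing sequence
  have hseq : ∀ n : ℕ, ∃ v ∈ S, v < sInf S + 1/((n:ℝ)+1) := by
    intro n
    exact Real.lt_sInf_add_pos hne (by positivity)
  choose v hvS hvlt using hseq
  have hvS' : ∀ n, ∃ (c : ℝ) (y' : Fin m → ℝ),
      (∀ ω', f ω' ≤ c + ∑ j, y' j * g j ω') ∧ v n = c + priceFn pilo pihi y' := hvS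
  choose c y hcy hvcy using hvS'
  set z : ℕ → ι → ℝ := fun n =>
    Sum.elim (fun j => max (y n j) 0) (fun j => max (-(y n j)) 0) with hz
  have hz0 : ∀ n i, 0 ≤ z n i := by
    intro n i
    rcases i with j | j <;> simp [hz]
  have hzy : ∀ n j, z n (Sum.inl j) - z n (Sum.inr j) = y n j := by
    intro n j
    simp only [hz, Sum.elim_inl, Sum.elim_inr]
    exact max_zero_sub_max_neg_zero_eq_self (y n j)
  have hzP : ∀ n, ∑ j, (z n (Sum.inl j) * pihi j - z n (Sum.inr j) * pilo j)
      = priceFn pilo pihi (y n) := by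
    intro n
    unfold priceFn
    exact Finset.sum_congr rfl fun j _ => by simp [hz]
  have hfeas : ∀ (n : ℕ) ω, f ω ≤ sInf S + 1/((n:ℝ)+1) + ∑ i, z n i * h i ω := by
    intro n ω
    have h1 := hcy n ω
    have h2 : ∑ i, z n i * h i ω = ∑ j, y n j * g j ω - priceFn pilo pihi (y n) := by
      rw [hid (z n) ω, hzP n]
      congr 1
      exact Finset.sum_congr rfl fun j _ => by rw [hzy n j]
    rw [h2]
    have h3 := hvlt n
    rw [hvcy n] at h3
    linarith
  obtain ⟨zz, hzz0, hzzf⟩ := lemA h f hNAh (sInf S) (Fintype.card ι) Finset.univ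
    (by simp) z hz0 (fun n i hi => absurd (Finset.mem_univ i) hi) hfeas
  refine ⟨fun j => zz (Sum.inl j) - zz (Sum.inr j), fun ω => ?_⟩
  have h1 := hzzf ω
  rw [hid zz ω] at h1
  have h2 := hprice zz hzz0
  linarith
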